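/- Minty's surjectivity theorem (resolvent of a maximal monotone relation is everywhere defined): Let n be a natural number and let T ⊆ ℝⁿ × ℝⁿ be a maximal monotone relation, i.e. T is monotone and every pair (x, x*) ∈ ℝⁿ × ℝⁿ satisfying ⟪x − y, x* − y*⟫ ≥ 0 for all (y, y*) ∈ T already belongs to T. Then for every z ∈ ℝⁿ there exists (x, x*) ∈ T with x + x* = z; that is, the resolvent (T + id)⁻¹ is a (firmly nonexpansive) map defined on all of ℝⁿ. -/

import Mathlib

open scoped RealInnerProductSpace
open Filter Finset Metric

section MintyAux

variable {E : Type*} [NormedAddCommGroup E] [InnerProductSpace ℝ E]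

/-- Exact second-order expansion of the quadratic `x ↦ ⟪x - a, x + b⟫` along a line. -/
private lemma minty_quad_expand (a b x d : E) (t : ℝ) :
    ⟪x + t • d - a, x + t • d + b⟫ =
      ⟪x - a, x + b⟫ + t * ⟪(2:ℝ) • x + b - a, d⟫ + t ^ 2 * ⟪d, d⟫ := by
  simp only [inner_add_left, inner_add_right, inner_sub_left, inner_sub_right,
    real_inner_smul_left, real_inner_smul_right, two_smul]
  rw [real_inner_comm d x, real_inner_comm d a, real_inner_comm d b]
  ring

/-- The finite intersection step of Minty's theorem: for a finite monotone family there
is a point `x` with `⟪x - p.1, x + p.2⟫ ≤ 0` for all pairs `p` in the family. -/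
private lemma minty_finite [FiniteDimensional ℝ E] (u : Finset (E × E)) (hne : u.Nonempty)
    (hmono : ∀ p ∈ u, ∀ q ∈ u, (0:ℝ) ≤ ⟪p.1 - q.1, p.2 - q.2⟫) :
    ∃ x : E, ∀ p ∈ u, ⟪x - p.1, x + p.2⟫ ≤ 0 := by
  classical
  set g : E × E → E → ℝ := fun p x => ⟪x - p.1, x + p.2⟫ with hg
  have hgcont : ∀ p : E × E, Continuous (g p) := fun p =>
    (continuous_id.sub continuous_const).inner (continuous_id.add continuous_const)
  set f : E → ℝ := fun x => u.sup' hne (fun p => g p x) with hf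
  have hfcont : Continuous f := Continuous.finset_sup'_apply hne fun p _ => hgcont p
  -- coercivity, hence existence of a global minimizer
  obtain ⟨p₀, hp₀u⟩ := hne
  have hflim : Tendsto f (cocompact E) atTop := by
    have h1 : Tendsto (fun x : E => ‖x‖ * (‖x‖ - ‖p₀.2 - p₀.1‖) - ‖p₀.1‖ * ‖p₀.2‖)
        (cocompact E) atTop := by
      have hn : Tendsto (fun x : E => ‖x‖) (cocompact E) atTop :=
        tendsto_norm_cocompact_atTop
      have h2 : Tendsto (fun s : ℝ => s * (s - ‖p₀.2 - p₀.1‖) - ‖p₀.1‖ * ‖p₀.2‖)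
          atTop atTop := by
        apply Filter.tendsto_atTop_add_const_right
        exact Filter.Tendsto.atTop_mul_atTop₀ tendsto_id
          (tendsto_atTop_add_const_right _ _ tendsto_id)
      exact h2.comp hn
    refine tendsto_atTop_mono (fun x => ?_) h1
    have h2 : g p₀ x ≤ f x := Finset.le_sup' (fun p => g p x) hp₀u
    have h3 : g p₀ x = ⟪x, x⟫ + ⟪x, p₀.2 - p₀.1⟫ - ⟪p₀.1, p₀.2⟫ := by
      rw [hg]
      simp only [inner_sub_left, inner_sub_right, inner_add_left, inner_add_right]
      rw [real_inner_comm p₀.1 x]; ring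
    have h4 : -(‖x‖ * ‖p₀.2 - p₀.1‖) ≤ ⟪x, p₀.2 - p₀.1⟫ := by
      have ha := abs_real_inner_le_norm x (p₀.2 - p₀.1)
      have hb := neg_abs_le ⟪x, p₀.2 - p₀.1⟫
      linarith
    have h5 : ⟪p₀.1, p₀.2⟫ ≤ ‖p₀.1‖ * ‖p₀.2‖ := real_inner_le_norm _ _
    have h6 : ⟪x, x⟫ = ‖x‖ * ‖x‖ := real_inner_self_eq_norm_mul_norm x
    nlinarith [h2]
  obtain ⟨xm, hxm⟩ := hfcont.exists_forall_le hflim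
  set fm : ℝ := f xm with hfm
  refine ⟨xm, fun p hp => le_trans (Finset.le_sup' (fun p => g p xm) hp) ?_⟩
  -- it remains to show `fm ≤ 0`
  set A : Finset (E × E) := u.filter (fun p => g p xm = fm) with hA
  set S : Finset E := A.image (fun p => (2:ℝ) • xm + p.2 - p.1) with hS
  have hAu : ∀ p ∈ A, p ∈ u := fun p hp => (Finset.mem_filter.mp hp).1
  have hAact : ∀ p ∈ A, g p xm = fm := fun p hp => (Finset.mem_filter.mp hp).2
  obtain ⟨q₀, hq₀u, hq₀⟩ := Finset.exists_mem_eq_sup' ⟨p₀, hp₀u⟩ (fun p => g p xm)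
  have hq₀A : q₀ ∈ A := Finset.mem_filter.mpr ⟨hq₀u, hq₀.symm⟩
  have hs₀S : (2:ℝ) • xm + q₀.2 - q₀.1 ∈ S := Finset.mem_image_of_mem _ hq₀A
  by_cases h0 : (0:E) ∈ convexHull ℝ (S : Set E)
  · -- extract a convex combination of the gradients and do the algebra
    rw [Finset.convexHull_eq] at h0
    obtain ⟨w, hw0, hw1, hcm⟩ := h0
    rw [Finset.centerMass_eq_of_sum_1 _ _ hw1] at hcm
    simp only [id] at hcm
    -- choose representatives in `A` for the points of `S`
    have hrep0 : ∀ y : E, ∃ p : E × E, y ∈ S → p ∈ A ∧ (2:ℝ) • xm + p.2 - p.1 = y := by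
      intro y
      by_cases h : y ∈ S
      · obtain ⟨p, hpA, hpf⟩ := Finset.mem_image.mp h
        exact ⟨p, fun _ => ⟨hpA, hpf⟩⟩
      · exact ⟨(0, 0), fun h' => absurd h' h⟩
    choose rep hrep using hrep0
    set uu : E := ∑ y ∈ S, w y • (rep y).1 with huu
    set vv : E := ∑ y ∈ S, w y • (rep y).2 with hvv
    set S1 : ℝ := ∑ y ∈ S, w y * ⟪(rep y).1, (rep y).2⟫ with hS1
    have h2x : (2:ℝ) • xm = uu - vv := by
      have hsplit : ∑ y ∈ S, w y • y
          = ∑ y ∈ S, ((w y • ((2:ℝ) • xm)) + (w y • (rep y).2 - w y • (rep y).1)) := by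
        refine Finset.sum_congr rfl fun y hy => ?_
        have h3 : w y • y = w y • ((2:ℝ) • xm + (rep y).2 - (rep y).1) := by
          rw [(hrep y hy).2]
        rw [h3, smul_sub, smul_add]
        abel
      rw [hsplit, Finset.sum_add_distrib, Finset.sum_sub_distrib, ← Finset.sum_smul, hw1,
        one_smul, ← hvv, ← huu] at hcm
      have : (2:ℝ) • xm + (vv - uu) = 0 := hcm
      rw [add_eq_zero_iff_eq_neg] at this
      rw [this]; abel
    -- `fm` equals the weighted sum of the active values
    have hfm_sum : fm = ∑ y ∈ S, w y * g (rep y) xm := by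
      have hc : ∀ y ∈ S, w y * g (rep y) xm = w y * fm := fun y hy => by
        rw [hAact _ (hrep y hy).1]
      rw [Finset.sum_congr rfl hc, ← Finset.sum_mul, hw1, one_mul]
    have hexp : ∑ y ∈ S, w y * g (rep y) xm = ⟪xm, xm⟫ - ⟪xm, uu - vv⟫ - S1 := by
      have hterm : ∀ y ∈ S, w y * g (rep y) xm =
          w y * ⟪xm, xm⟫ + ⟪xm, w y • (rep y).2⟫ - ⟪w y • (rep y).1, xm⟫ - w y * ⟪(rep y).1, (rep y).2⟫ := by
        intro y hy
        rw [hg]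
        simp only [inner_sub_left, inner_add_right, real_inner_smul_left,
          real_inner_smul_right]
        ring_nf
      rw [Finset.sum_congr rfl hterm]
      rw [Finset.sum_sub_distrib, Finset.sum_sub_distrib, Finset.sum_add_distrib,
        ← Finset.sum_mul, hw1, ← inner_sum, ← sum_inner, ← huu, ← hvv, ← hS1]
      rw [inner_sub_right, real_inner_comm uu xm]
      ring
    -- monotonicity of the family gives `⟪uu, vv⟫ ≤ S1`
    have hT1 : ∑ y ∈ S, ∑ z ∈ S, w y * w z * ⟪(rep y).1, (rep y).2⟫ = S1 := by
      rw [hS1]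
      refine Finset.sum_congr rfl fun y hy => ?_
      calc ∑ z ∈ S, w y * w z * ⟪(rep y).1, (rep y).2⟫
          = (∑ z ∈ S, w z) * (w y * ⟪(rep y).1, (rep y).2⟫) := by
            rw [Finset.sum_mul]
            exact Finset.sum_congr rfl fun z _ => by ring
        _ = w y * ⟪(rep y).1, (rep y).2⟫ := by rw [hw1, one_mul]
    have hT4 : ∑ y ∈ S, ∑ z ∈ S, w y * w z * ⟪(rep z).1, (rep z).2⟫ = S1 := by
      rw [Finset.sum_comm, hS1]
      refine Finset.sum_congr rfl fun z hz => ?_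
      calc ∑ y ∈ S, w y * w z * ⟪(rep z).1, (rep z).2⟫
          = (∑ y ∈ S, w y) * (w z * ⟪(rep z).1, (rep z).2⟫) := by
            rw [Finset.sum_mul]
            exact Finset.sum_congr rfl fun y _ => by ring
        _ = w z * ⟪(rep z).1, (rep z).2⟫ := by rw [hw1, one_mul]
    have hT2 : ∑ y ∈ S, ∑ z ∈ S, w y * w z * ⟪(rep y).1, (rep z).2⟫ = ⟪uu, vv⟫ := by
      rw [huu, sum_inner]
      refine Finset.sum_congr rfl fun y hy => ?_
      rw [real_inner_smul_left, hvv, inner_sum, Finset.mul_sum]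
      refine Finset.sum_congr rfl fun z hz => ?_
      rw [real_inner_smul_right]; ring
    have hT3 : ∑ y ∈ S, ∑ z ∈ S, w y * w z * ⟪(rep z).1, (rep y).2⟫ = ⟪uu, vv⟫ := by
      rw [hvv, inner_sum]
      refine Finset.sum_congr rfl fun y hy => ?_
      rw [real_inner_smul_right, huu, sum_inner, Finset.mul_sum]
      refine Finset.sum_congr rfl fun z hz => ?_
      rw [real_inner_smul_left]; ring
    have hmono_sum : ⟪uu, vv⟫ ≤ S1 := by
      have hnn : (0:ℝ) ≤ ∑ y ∈ S, ∑ z ∈ S, w y * w z * ⟪(rep y).1 - (rep z).1, (rep y).2 - (rep z).2⟫ := by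
        refine Finset.sum_nonneg fun y hy => Finset.sum_nonneg fun z hz => ?_
        exact mul_nonneg (mul_nonneg (hw0 y hy) (hw0 z hz))
          (hmono _ (hAu _ (hrep y hy).1) _ (hAu _ (hrep z hz).1))
      have hexpand : ∑ y ∈ S, ∑ z ∈ S, w y * w z * ⟪(rep y).1 - (rep z).1, (rep y).2 - (rep z).2⟫
          = S1 - ⟪uu, vv⟫ - ⟪uu, vv⟫ + S1 := by
        calc ∑ y ∈ S, ∑ z ∈ S, w y * w z * ⟪(rep y).1 - (rep z).1, (rep y).2 - (rep z).2⟫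
            = ∑ y ∈ S, ∑ z ∈ S, (w y * w z * ⟪(rep y).1, (rep y).2⟫ - w y * w z * ⟪(rep y).1, (rep z).2⟫
                - w y * w z * ⟪(rep z).1, (rep y).2⟫ + w y * w z * ⟪(rep z).1, (rep z).2⟫) := by
              refine Finset.sum_congr rfl fun y hy => Finset.sum_congr rfl fun z hz => ?_
              simp only [inner_sub_left, inner_sub_right]
              ring
          _ = S1 - ⟪uu, vv⟫ - ⟪uu, vv⟫ + S1 := by
              simp only [Finset.sum_add_distrib, Finset.sum_sub_distrib]
              rw [hT1, hT2, hT3, hT4]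
      linarith [hexpand ▸ hnn]
    -- put everything together
    have hfm_eq : fm = -⟪xm, xm⟫ - S1 := by
      have h2 : ⟪xm, uu - vv⟫ = 2 * ⟪xm, xm⟫ := by
        rw [← h2x, real_inner_smul_right]
      rw [hfm_sum, hexp, h2]; ring
    have hxnorm : ⟪xm, xm⟫ = ‖xm‖ ^ 2 := real_inner_self_eq_norm_sq xm
    have hnormid : ‖uu - vv‖ ^ 2 = 4 * ‖xm‖ ^ 2 := by
      have h4 : ‖uu - vv‖ = 2 * ‖xm‖ := by
        rw [← h2x, norm_smul]
        norm_num
      rw [h4]; ring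
    have hsub : ‖uu - vv‖ ^ 2 = ‖uu‖ ^ 2 - 2 * ⟪uu, vv⟫ + ‖vv‖ ^ 2 := norm_sub_sq_real uu vv
    have hadd : ‖uu + vv‖ ^ 2 = ‖uu‖ ^ 2 + 2 * ⟪uu, vv⟫ + ‖vv‖ ^ 2 := norm_add_sq_real uu vv
    have haddnn : (0:ℝ) ≤ ‖uu + vv‖ ^ 2 := sq_nonneg _
    linarith
  · -- otherwise, separate `0` from the hull and contradict minimality
    exfalso
    obtain ⟨φ, c, hc0, hcS⟩ := geometric_hahn_banach_point_closed
      (convex_convexHull ℝ (S : Set E)) (S.finite_toSet.isCompact_convexHull (𝕜 := ℝ)).isClosed h0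
    rw [map_zero] at hc0
    set d : E := -(InnerProductSpace.toDual ℝ E).symm φ with hd
    have hdip : ∀ y : E, ⟪y, d⟫ = -φ y := by
      intro y
      rw [hd, inner_neg_right, real_inner_comm, InnerProductSpace.toDual_symm_apply]
    have hdS : ∀ y ∈ S, ⟪y, d⟫ < -c := by
      intro y hy
      have := hcS y (subset_convexHull ℝ (S : Set E) hy)
      rw [hdip]; linarith
    have hdd : (0:ℝ) < ⟪d, d⟫ := by
      rw [real_inner_self_eq_norm_mul_norm]
      have h1 := hdS _ hs₀S
      have hdne : d ≠ 0 := by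
        intro h
        rw [h, inner_zero_right] at h1
        linarith
      have := norm_pos_iff.mpr hdne
      positivity
    -- every pair in `u` eventually strictly decreases along `d`
    have hev : ∀ p ∈ u, ∀ᶠ t in nhdsWithin (0:ℝ) (Set.Ioi 0), g p (xm + t • d) < fm := by
      intro p hp
      by_cases hpA : p ∈ A
      · have hgrad : ⟪(2:ℝ) • xm + p.2 - p.1, d⟫ < -c :=
          hdS _ (Finset.mem_image_of_mem _ hpA)
        have hcpos : 0 < c / ⟪d, d⟫ := div_pos hc0 hdd
        filter_upwards [Ioo_mem_nhdsGT_of_mem (Set.mem_Ico.mpr ⟨le_refl 0, hcpos⟩)]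
          with t ht
        obtain ⟨ht0, htc⟩ := ht
        show ⟪xm + t • d - p.1, xm + t • d + p.2⟫ < fm
        rw [minty_quad_expand p.1 p.2 xm d t]
        have hval : ⟪xm - p.1, xm + p.2⟫ = fm := hAact p hpA
        rw [hval]
        have h1 : t * ⟪(2:ℝ) • xm + p.2 - p.1, d⟫ ≤ t * (-c) :=
          mul_le_mul_of_nonneg_left (le_of_lt hgrad) (le_of_lt ht0)
        have h2 : t * ⟪d, d⟫ < c := by
          rw [lt_div_iff₀ hdd] at htc
          linarith
        nlinarith
      · have hlt : g p xm < fm :=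
          lt_of_le_of_ne (Finset.le_sup' (fun p => g p xm) hp)
            (fun h => hpA (Finset.mem_filter.mpr ⟨hp, h⟩))
        have hcont : Continuous fun t : ℝ => g p (xm + t • d) :=
          (hgcont p).comp (continuous_const.add (continuous_id.smul continuous_const))
        have htd : Tendsto (fun t : ℝ => g p (xm + t • d)) (nhds 0) (nhds (g p xm)) := by
          have := hcont.tendsto 0
          simpa using this
        exact (htd.eventually_lt_const hlt).filter_mono nhdsWithin_le_nhds
    have hev' : ∀ᶠ t in nhdsWithin (0:ℝ) (Set.Ioi 0),
        ∀ p ∈ u, g p (xm + t • d) < fm := by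
      rw [eventually_all_finset]
      exact hev
    obtain ⟨t, htlt⟩ := hev'.exists
    have : f (xm + t • d) < fm := by
      rw [hf]
      exact (Finset.sup'_lt_iff ⟨p₀, hp₀u⟩).mpr fun p hp => htlt p hp
    exact absurd (hxm (xm + t • d)) (not_le.mpr this)

end MintyAux

set_option maxHeartbeats 800000 in
/-- Minty's surjectivity theorem: if `T ⊆ ℝⁿ × ℝⁿ` is a maximal monotone relation, then
for every `z ∈ ℝⁿ` there is `(x, x*) ∈ T` with `x + x* = z`; i.e. the resolvent
`(T + id)⁻¹` is defined on all of `ℝⁿ`. -/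
theorem minty_surjectivity (n : ℕ)
    (T : Set (EuclideanSpace ℝ (Fin n) × EuclideanSpace ℝ (Fin n)))
    (hmono : ∀ p ∈ T, ∀ q ∈ T, (0:ℝ) ≤ ⟪p.1 - q.1, p.2 - q.2⟫)
    (hmax : ∀ x xs : EuclideanSpace ℝ (Fin n),
      (∀ q ∈ T, (0:ℝ) ≤ ⟪x - q.1, xs - q.2⟫) → (x, xs) ∈ T) :
    ∀ z : EuclideanSpace ℝ (Fin n), ∃ p ∈ T, p.1 + p.2 = z := by
  classical
  intro z
  -- T is nonempty
  have hTne : T.Nonempty := by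
    rcases Set.eq_empty_or_nonempty T with h | h
    · exact ⟨(0, 0), hmax 0 0 (fun q hq => by rw [h] at hq; exact absurd hq (Set.notMem_empty q))⟩
    · exact h
  obtain ⟨p₀, hp₀⟩ := hTne
  -- the key claim: a point in the intersection of all the "resolvent balls"
  have key : ∃ x : EuclideanSpace ℝ (Fin n), ∀ q ∈ T, ⟪x - q.1, x + (q.2 - z)⟫ ≤ 0 := by
    set C : T → Set (EuclideanSpace ℝ (Fin n)) := fun q => {x : EuclideanSpace ℝ (Fin n) | ⟪x - q.1.1, x + (q.1.2 - z)⟫ ≤ 0} with hC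
    have hCclosed : ∀ q : T, IsClosed (C q) := by
      intro q
      have : Continuous fun x : EuclideanSpace ℝ (Fin n) => ⟪x - q.1.1, x + (q.1.2 - z)⟫ :=
        (continuous_id.sub continuous_const).inner (continuous_id.add continuous_const)
      exact isClosed_le this continuous_const
    -- each C q is contained in a closed ball
    have hCsub : ∀ q : T, C q ⊆
        closedBall ((2:ℝ)⁻¹ • (q.1.1 - (q.1.2 - z))) (‖q.1.1 + (q.1.2 - z)‖ / 2) := by
      intro q x hx
      set a : EuclideanSpace ℝ (Fin n) := q.1.1
      set b : EuclideanSpace ℝ (Fin n) := q.1.2 - z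
      have hx' : ⟪x - a, x + b⟫ ≤ 0 := hx
      rw [mem_closedBall, dist_eq_norm]
      have hid : ‖x - (2:ℝ)⁻¹ • (a - b)‖ ^ 2 = ⟪x - a, x + b⟫ + ‖a + b‖ ^ 2 / 4 := by
        rw [norm_sub_sq_real, real_inner_smul_right, norm_smul, norm_add_sq_real]
        simp only [inner_sub_left, inner_sub_right, inner_add_left, inner_add_right]
        rw [real_inner_comm a x, real_inner_comm b x, real_inner_comm b a]
        have h1 : ‖x‖ ^ 2 = ⟪x, x⟫ := (real_inner_self_eq_norm_sq x).symm
        have h2 : ‖(2:ℝ)⁻¹‖ = (2:ℝ)⁻¹ := by norm_num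
        have h3 : ‖a - b‖ ^ 2 = ⟪a, a⟫ - 2 * ⟪a, b⟫ + ⟪b, b⟫ := by
          rw [norm_sub_sq_real, real_inner_self_eq_norm_sq, real_inner_self_eq_norm_sq]
        have h4 : ‖a‖ ^ 2 = ⟪a, a⟫ := (real_inner_self_eq_norm_sq a).symm
        have h5 : ‖b‖ ^ 2 = ⟪b, b⟫ := (real_inner_self_eq_norm_sq b).symm
        rw [h2, mul_pow]
        nlinarith [h3, real_inner_comm a b]
      have hnn : (0:ℝ) ≤ ‖x - (2:ℝ)⁻¹ • (a - b)‖ := norm_nonneg _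
      have hrnn : (0:ℝ) ≤ ‖a + b‖ / 2 := by positivity
      nlinarith [hid]
    have hCcompact : IsCompact (C ⟨p₀, hp₀⟩) :=
      (isCompact_closedBall _ _).of_isClosed_subset (hCclosed _) (hCsub _)
    have hFIP : ∀ v : Finset T, (C ⟨p₀, hp₀⟩ ∩ ⋂ i ∈ v, C i).Nonempty := by
      intro v
      set wfin : Finset (EuclideanSpace ℝ (Fin n) × EuclideanSpace ℝ (Fin n)) :=
        insert (p₀.1, p₀.2 - z) (v.image fun i => (i.1.1, i.1.2 - z)) with hwfin
      have hwne : wfin.Nonempty := ⟨_, Finset.mem_insert_self _ _⟩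
      have hwT : ∀ p ∈ wfin, ∃ q ∈ T, p = (q.1, q.2 - z) := by
        intro p hp
        rw [hwfin, Finset.mem_insert] at hp
        rcases hp with h | h
        · exact ⟨p₀, hp₀, by rw [h]⟩
        · obtain ⟨i, _, hi⟩ := Finset.mem_image.mp h
          exact ⟨i.1, i.2, by rw [← hi]⟩
      have hwmono : ∀ p ∈ wfin, ∀ q ∈ wfin, (0:ℝ) ≤ ⟪p.1 - q.1, p.2 - q.2⟫ := by
        intro p hp q hq
        obtain ⟨p', hp'T, rfl⟩ := hwT p hp
        obtain ⟨q', hq'T, rfl⟩ := hwT q hq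
        have := hmono p' hp'T q' hq'T
        simpa using this
      obtain ⟨x, hx⟩ := minty_finite wfin hwne hwmono
      refine ⟨x, ?_, ?_⟩
      · exact hx _ (Finset.mem_insert_self _ _)
      · rw [Set.mem_iInter₂]
        intro i hi
        exact hx _ (Finset.mem_insert_of_mem (Finset.mem_image_of_mem _ hi))
    obtain ⟨x, -, hx⟩ := hCcompact.inter_iInter_nonempty C hCclosed hFIP
    rw [Set.mem_iInter] at hx
    exact ⟨x, fun q hq => hx ⟨q, hq⟩⟩
  obtain ⟨x, hx⟩ := key
  have hxT : (x, z - x) ∈ T := by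
    refine hmax x (z - x) fun q hq => ?_
    have h1 := hx q hq
    have h2 : z - x - q.2 = -(x + (q.2 - z)) := by abel
    calc (0:ℝ) ≤ -⟪x - q.1, x + (q.2 - z)⟫ := by linarith
      _ = ⟪x - q.1, -(x + (q.2 - z))⟫ := (inner_neg_right _ _).symm
      _ = ⟪x - q.1, z - x - q.2⟫ := by rw [← h2]
  exact ⟨(x, z - x), hxT, by show x + (z - x) = z; abel⟩
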